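/- Let (x_n) be a bounded sequence of real numbers and H_n = ∑_{k=1}^n 1/k. Then liminf_{n→∞} (1/n) ∑_{k=1}^n x_k ≤ liminf_{n→∞} (1/H_n) ∑_{k=1}^n x_k/k ≤ limsup_{n→∞} (1/H_n) ∑_{k=1}^n x_k/k ≤ limsup_{n→∞} (1/n) ∑_{k=1}^n x_k. -/

import Mathlib

open Filter Finset Topology

/-- The `n`-th harmonic number `H_n = ∑_{k=1}^n 1/k` as a real number. -/
noncomputable def H (n : ℕ) : ℝ := ∑ k ∈ Finset.range n, (1 : ℝ) / (k + 1)

/-- For a bounded real sequence `(x_n)`, the harmonic (logarithmic) averages are squeezed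
between the lower and upper Cesàro averages:
`liminf (1/n) ∑_{k=1}^n x_k ≤ liminf (1/H_n) ∑_{k=1}^n x_k/k
  ≤ limsup (1/H_n) ∑_{k=1}^n x_k/k ≤ limsup (1/n) ∑_{k=1}^n x_k`. -/
noncomputable def ces (x : ℕ → ℝ) (n : ℕ) : ℝ := (1 / (n : ℝ)) * ∑ k ∈ Finset.Icc 1 n, x k
noncomputable def lg (x : ℕ → ℝ) (n : ℕ) : ℝ :=
  (1 / H n) * ∑ k ∈ Finset.Icc 1 n, x k / (k : ℝ)

lemma sum_Icc_one (f : ℕ → ℝ) (n : ℕ) :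
    ∑ k ∈ Finset.Icc 1 n, f k = ∑ i ∈ Finset.range n, f (i + 1) := by
  induction n with
  | zero => simp
  | succ n ih =>
    rw [Finset.sum_Icc_succ_top (by omega), ih, Finset.sum_range_succ]

lemma H_ge_one {n : ℕ} (hn : 1 ≤ n) : 1 ≤ H n := by
  have h0 : (0:ℕ) ∈ Finset.range n := Finset.mem_range.2 (by omega)
  have := Finset.single_le_sum (f := fun k : ℕ => (1:ℝ)/(k+1))
    (fun i _ => by positivity) h0
  simpa [H] using this

lemma H_pos {n : ℕ} (hn : 1 ≤ n) : 0 < H n := lt_of_lt_of_le one_pos (H_ge_one hn)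

lemma H_tendsto : Tendsto H atTop atTop := by
  have := Real.tendsto_sum_range_one_div_nat_succ_atTop
  show Tendsto (fun n => H n) atTop atTop
  simpa [H, one_div] using this

lemma neg_limsup (u : ℕ → ℝ) : limsup (fun n => -u n) atTop = - liminf u atTop := by
  rw [limsup_eq, liminf_eq, Real.sInf_def]
  congr 2
  ext a
  simp [Set.mem_neg, neg_le_neg_iff]

lemma abel (x : ℕ → ℝ) (n : ℕ) :
    ∑ k ∈ Finset.Icc 1 (n+1), x k / (k : ℝ) =
      ces x (n+1) + ∑ k ∈ Finset.Icc 1 n, ces x k / ((k : ℝ) + 1) := by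
  induction n with
  | zero => simp [ces]
  | succ n ih =>
    rw [Finset.sum_Icc_succ_top (show 1 ≤ n+2 by omega), ih,
      Finset.sum_Icc_succ_top (show 1 ≤ n+1 by omega)]
    have hkey : ces x (n+1) + x (n+1+1) / ((n+1+1:ℕ):ℝ) =
        ces x (n+1+1) + ces x (n+1) / (((n+1:ℕ):ℝ) + 1) := by
      simp only [ces]
      rw [Finset.sum_Icc_succ_top (show 1 ≤ n+2 by omega)]
      have h1 : ((n:ℝ)+1) ≠ 0 := by positivity
      have h2 : ((n:ℝ)+2) ≠ 0 := by positivity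
      push_cast
      field_simp
      ring
    linarith

lemma ces_abs_le (x : ℕ → ℝ) {C : ℝ} (hC : ∀ n, |x n| ≤ C) (n : ℕ) : |ces x n| ≤ C := by
  have hC0 : 0 ≤ C := le_trans (abs_nonneg _) (hC 0)
  cases n with
  | zero => simpa [ces] using hC0
  | succ m =>
    have hpos : (0:ℝ) < ((m+1:ℕ):ℝ) := by exact_mod_cast Nat.succ_pos m
    have hsum : |∑ k ∈ Finset.Icc 1 (m+1), x k| ≤ ((m+1:ℕ):ℝ) * C := by
      calc |∑ k ∈ Finset.Icc 1 (m+1), x k| ≤ ∑ k ∈ Finset.Icc 1 (m+1), |x k| :=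
            Finset.abs_sum_le_sum_abs _ _
        _ ≤ ∑ k ∈ Finset.Icc 1 (m+1), C := Finset.sum_le_sum fun k _ => hC k
        _ = ((m+1:ℕ):ℝ) * C := by
            rw [Finset.sum_const, Nat.card_Icc, nsmul_eq_mul]
            norm_num
    rw [ces, abs_mul, abs_of_nonneg (by positivity : (0:ℝ) ≤ 1/((m+1:ℕ):ℝ))]
    calc (1/((m+1:ℕ):ℝ)) * |∑ k ∈ Finset.Icc 1 (m+1), x k|
        ≤ (1/((m+1:ℕ):ℝ)) * (((m+1:ℕ):ℝ) * C) :=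
          mul_le_mul_of_nonneg_left hsum (by positivity)
      _ = C := by field_simp

lemma lg_abs_le (x : ℕ → ℝ) {C : ℝ} (hC : ∀ n, |x n| ≤ C) (n : ℕ) : |lg x n| ≤ C := by
  have hC0 : 0 ≤ C := le_trans (abs_nonneg _) (hC 0)
  cases n with
  | zero => simpa [lg] using hC0
  | succ m =>
    have hH := H_pos (show 1 ≤ m + 1 by omega)
    have hsum : |∑ k ∈ Finset.Icc 1 (m+1), x k / (k:ℝ)| ≤ C * H (m+1) := by
      calc |∑ k ∈ Finset.Icc 1 (m+1), x k / (k:ℝ)|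
          ≤ ∑ k ∈ Finset.Icc 1 (m+1), |x k / (k:ℝ)| := Finset.abs_sum_le_sum_abs _ _
        _ ≤ ∑ k ∈ Finset.Icc 1 (m+1), C / (k:ℝ) := by
            apply Finset.sum_le_sum
            intro k hk
            have hk1 : 1 ≤ k := (Finset.mem_Icc.1 hk).1
            have hkpos : (0:ℝ) < (k:ℝ) := by exact_mod_cast hk1
            rw [abs_div, abs_of_pos hkpos]
            gcongr
            exact hC k
        _ = C * H (m+1) := by
            rw [sum_Icc_one (fun k => C / (k:ℝ)), H, Finset.mul_sum]
            apply Finset.sum_congr rfl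
            intro i _
            push_cast
            ring
    have : |lg x (m+1)| = (1/H (m+1)) * |∑ k ∈ Finset.Icc 1 (m+1), x k / (k:ℝ)| := by
      rw [lg, abs_mul, abs_of_nonneg (by positivity : (0:ℝ) ≤ 1 / H (m+1))]
    rw [this]
    calc (1/H (m+1)) * |∑ k ∈ Finset.Icc 1 (m+1), x k / (k:ℝ)|
        ≤ (1/H (m+1)) * (C * H (m+1)) := by
          apply mul_le_mul_of_nonneg_left hsum (by positivity)
      _ = C := by field_simp

lemma bdd_le_of_abs {f : ℕ → ℝ} {C : ℝ} (h : ∀ n, |f n| ≤ C) :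
    IsBoundedUnder (· ≤ ·) atTop f :=
  isBoundedUnder_of ⟨C, fun n => (abs_le.1 (h n)).2⟩

lemma bdd_ge_of_abs {f : ℕ → ℝ} {C : ℝ} (h : ∀ n, |f n| ≤ C) :
    IsBoundedUnder (· ≥ ·) atTop f :=
  isBoundedUnder_of ⟨-C, fun n => (abs_le.1 (h n)).1⟩

lemma key (x : ℕ → ℝ) {C : ℝ} (hC : ∀ n, |x n| ≤ C) :
    limsup (fun n : ℕ => (1 / H n) * ∑ k ∈ Finset.Icc 1 n, x k / (k : ℝ)) atTop ≤
      limsup (fun n : ℕ => (1 / (n : ℝ)) * ∑ k ∈ Finset.Icc 1 n, x k) atTop := by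
  show limsup (lg x) atTop ≤ limsup (ces x) atTop
  apply le_of_forall_gt_imp_ge_of_dense
  intro b hb
  have hev : ∀ᶠ n in atTop, ces x n < b :=
    eventually_lt_of_limsup_lt hb (bdd_le_of_abs (ces_abs_le x hC))
  obtain ⟨N0, hN0⟩ := eventually_atTop.1 hev
  set N := max N0 1 with hNdef
  have hN1 : 1 ≤ N := le_max_right _ _
  have hNn : ∀ k, N ≤ k → ces x k < b := fun k hk => hN0 k (le_trans (le_max_left _ _) hk)
  set c : ℝ := (∑ k ∈ Finset.Ico 1 N, ces x k / ((k:ℝ)+1)) + b - b * H N with hcdef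
  have hle : ∀ n, N ≤ n → lg x n ≤ b + c * (1 / H n) := by
    intro n hn
    have hn1 : 1 ≤ n := le_trans hN1 hn
    obtain ⟨m, rfl⟩ : ∃ m, n = m + 1 := ⟨n - 1, by omega⟩
    have hH := H_pos (show 1 ≤ m + 1 by omega)
    have habel := abel x m
    have hsplit : ∑ k ∈ Finset.Icc 1 m, ces x k / ((k:ℝ)+1) =
        (∑ k ∈ Finset.Ico 1 N, ces x k / ((k:ℝ)+1)) +
          ∑ k ∈ Finset.Ico N (m+1), ces x k / ((k:ℝ)+1) := by
      rw [← Finset.Ico_add_one_right_eq_Icc]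
      exact (Finset.sum_Ico_consecutive _ hN1 hn).symm
    have hIco : ∑ k ∈ Finset.Ico N (m+1), (1:ℝ)/((k:ℝ)+1) = H (m+1) - H N := by
      have := Finset.sum_Ico_consecutive (fun k : ℕ => (1:ℝ)/((k:ℝ)+1))
        (Nat.zero_le N) hn
      simp only [H, Finset.range_eq_Ico]
      rw [eq_sub_iff_add_eq, add_comm]
      exact this
    have hbound2 : ∑ k ∈ Finset.Ico N (m+1), ces x k / ((k:ℝ)+1) ≤
        b * (H (m+1) - H N) := by
      calc ∑ k ∈ Finset.Ico N (m+1), ces x k / ((k:ℝ)+1)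
          ≤ ∑ k ∈ Finset.Ico N (m+1), b * ((1:ℝ)/((k:ℝ)+1)) := by
            apply Finset.sum_le_sum
            intro k hk
            have hkb := (hNn k (Finset.mem_Ico.1 hk).1).le
            have hkpos : (0:ℝ) < (k:ℝ) + 1 := by positivity
            rw [mul_one_div]
            gcongr
        _ = b * (H (m+1) - H N) := by rw [← Finset.mul_sum, hIco]
    have hT : ∑ k ∈ Finset.Icc 1 (m+1), x k / (k : ℝ) ≤ b * H (m+1) + c := by
      have hces := (hNn (m+1) hn).le
      rw [habel, hsplit]
      have := hbound2
      simp only [hcdef]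
      linarith
    have : lg x (m+1) ≤ (1 / H (m+1)) * (b * H (m+1) + c) := by
      rw [lg]
      exact mul_le_mul_of_nonneg_left hT (by positivity)
    calc lg x (m+1) ≤ (1 / H (m+1)) * (b * H (m+1) + c) := this
      _ = b + c * (1 / H (m+1)) := by field_simp
  have hg : Tendsto (fun n => b + c * (1 / H n)) atTop (𝓝 b) := by
    have h0 : Tendsto (fun n => 1 / H n) atTop (𝓝 0) := by
      simpa [one_div, Pi.inv_def] using H_tendsto.inv_tendsto_atTop
    have := (tendsto_const_nhds (x := b)).add ((tendsto_const_nhds (x := c)).mul h0)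
    simpa using this
  calc limsup (lg x) atTop ≤ limsup (fun n => b + c * (1 / H n)) atTop :=
        limsup_le_limsup (eventually_atTop.2 ⟨N, hle⟩)
          ((bdd_ge_of_abs (lg_abs_le x hC)).isCoboundedUnder_le)
          hg.isBoundedUnder_le
    _ = b := hg.limsup_eq

theorem liminf_cesaro_le_liminf_log_le_limsup_log_le_limsup_cesaro
    (x : ℕ → ℝ) (hx : ∃ C : ℝ, ∀ n : ℕ, |x n| ≤ C) :
    liminf (fun n : ℕ => (1 / (n : ℝ)) * ∑ k ∈ Finset.Icc 1 n, x k) atTop ≤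
      liminf (fun n : ℕ => (1 / H n) * ∑ k ∈ Finset.Icc 1 n, x k / (k : ℝ)) atTop ∧
    liminf (fun n : ℕ => (1 / H n) * ∑ k ∈ Finset.Icc 1 n, x k / (k : ℝ)) atTop ≤
      limsup (fun n : ℕ => (1 / H n) * ∑ k ∈ Finset.Icc 1 n, x k / (k : ℝ)) atTop ∧
    limsup (fun n : ℕ => (1 / H n) * ∑ k ∈ Finset.Icc 1 n, x k / (k : ℝ)) atTop ≤
      limsup (fun n : ℕ => (1 / (n : ℝ)) * ∑ k ∈ Finset.Icc 1 n, x k) atTop := by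
  obtain ⟨C, hC⟩ := hx
  refine ⟨?_, ?_, key x hC⟩
  · have h1 := key (fun n => -x n) (C := C) (fun n => by simpa using hC n)
    have e1 : (fun n : ℕ => (1 / H n) * ∑ k ∈ Finset.Icc 1 n, (-x k) / (k : ℝ)) =
        fun n : ℕ => -((1 / H n) * ∑ k ∈ Finset.Icc 1 n, x k / (k : ℝ)) := by
      funext n
      rw [← mul_neg, ← Finset.sum_neg_distrib]
      simp [neg_div]
    have e2 : (fun n : ℕ => (1 / (n : ℝ)) * ∑ k ∈ Finset.Icc 1 n, (-x k)) =
        fun n : ℕ => -((1 / (n : ℝ)) * ∑ k ∈ Finset.Icc 1 n, x k) := by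
      funext n
      rw [← mul_neg, ← Finset.sum_neg_distrib]
    rw [e1, e2, neg_limsup, neg_limsup] at h1
    exact neg_le_neg_iff.1 h1
  · exact liminf_le_limsup (bdd_le_of_abs (lg_abs_le x hC)) (bdd_ge_of_abs (lg_abs_le x hC))
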